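/- Let n ≥ 9 and let F, F' be facets of Δ₃(W_n) with F ∈ T_s, F^c = {α_s} ⊔ {s_1, n−1}, and F'^c = {α_s, s_1, μ} for some μ ∈ F. If α_s <_O μ, then F' ≪ F. -/

import Mathlib

open Finset

/-- The squared cycle graph `Wₙ` on the vertex set `{0, 1, …, n−1} ⊆ ℕ`:
`x` and `y` are adjacent iff `x − y ≡ ±1, ±2 (mod n)`. -/
def sqCycle (n : ℕ) : SimpleGraph ℕ where
  Adj x y := x < n ∧ y < n ∧ x ≠ y ∧
    ((x + 1) % n = y ∨ (x + 2) % n = y ∨ (y + 1) % n = x ∨ (y + 2) % n = x)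
  symm := by
    constructor
    rintro x y ⟨hx, hy, hxy, h⟩
    exact ⟨hy, hx, hxy.symm, by tauto⟩
  loopless := by
    constructor
    rintro x ⟨-, -, hxx, -⟩
    exact hxx rfl

/-- The complement `F^c` of `F` in the vertex set of `Wₙ`. -/
def cmpl (n : ℕ) (F : Finset ℕ) : Finset ℕ := Finset.range n \ F

/-- `F` is a facet of the 3-cut complex `Δ₃(Wₙ)` : an `(n−3)`-subset of the
vertex set whose complement induces a disconnected subgraph. -/
def IsFacet (n : ℕ) (F : Finset ℕ) : Prop :=
  F ⊆ Finset.range n ∧ F.card = n - 3 ∧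
    ¬ ((sqCycle n).induce (↑(cmpl n F) : Set ℕ)).Connected

/-- `m = (n+1)/2` if `n` is odd and `m = n/2` if `n` is even. -/
def mVal (n : ℕ) : ℕ := (n + 1) / 2

/-- `α_t = m + (−1)^(t−1) ⌊t/2⌋ (mod n)`. -/
def alphaSeq (n t : ℕ) : ℕ :=
  ((((mVal n : ℤ) + (-1) ^ (t - 1) * ((t / 2 : ℕ) : ℤ)) % (n : ℤ))).toNat

/-- `x <_O y` : `x` appears strictly before `y` in `O = (α_1, …, α_n)`. -/
def ltO (n x y : ℕ) : Prop :=
  ∃ s t : ℕ, 1 ≤ s ∧ s < t ∧ t ≤ n ∧ alphaSeq n s = x ∧ alphaSeq n t = y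

/-- `F ∈ T_s` : `α_s` is the `<_O`-least element of `F^c`. -/
def classT (n s : ℕ) (F : Finset ℕ) : Prop :=
  1 ≤ s ∧ s ≤ n ∧ alphaSeq n s ∈ cmpl n F ∧
    ∀ x ∈ cmpl n F, x ≠ alphaSeq n s → ltO n (alphaSeq n s) x

/-- `F ∈ T_s` together with the decomposition `F^c = {α_s} ⊔ {s₁, s₂}`, `s₁ < s₂`. -/
def cDecomp (n s s1 s2 : ℕ) (F : Finset ℕ) : Prop :=
  classT n s F ∧ s1 < s2 ∧ alphaSeq n s ≠ s1 ∧ alphaSeq n s ≠ s2 ∧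
    cmpl n F = {alphaSeq n s, s1, s2}

/-- The order `≪` on facets. -/
def llt (n : ℕ) (F F' : Finset ℕ) : Prop :=
  ∃ s t s1 s2 t1 t2, cDecomp n s s1 s2 F ∧ cDecomp n t t1 t2 F' ∧
    (s < t ∨ (s = t ∧ (s1 < t1 ∨ (s1 = t1 ∧ s2 < t2))))

/-- The exceptional set `D` of facets (conditions (D1)–(D4)). -/
def memD (n : ℕ) (F : Finset ℕ) : Prop :=
  ∃ s, classT n s F ∧
    ((alphaSeq n s = mVal n + 1 ∧
        cmpl n F = {alphaSeq n s, alphaSeq n s - 3, alphaSeq n s + 1}) ∨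
      (alphaSeq n s = mVal n - 1 ∧
        cmpl n F = {alphaSeq n s, alphaSeq n s - 1, alphaSeq n s + 3}) ∨
      (alphaSeq n s = mVal n + 1 ∧
        cmpl n F = {alphaSeq n s, alphaSeq n s - 4, alphaSeq n s - 3}) ∨
      (mVal n - 1 ≤ alphaSeq n s ∧ alphaSeq n s ≤ n - 6 ∧
        cmpl n F = {alphaSeq n s, alphaSeq n s + 3, alphaSeq n s + 4}))

/-- The shelling order `≺` on facets. -/
def precOrd (n : ℕ) (F F' : Finset ℕ) : Prop :=
  (¬ memD n F ∧ ¬ memD n F' ∧ llt n F F') ∨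
  (memD n F ∧ ¬ memD n F' ∧ ∃ s t, classT n s F ∧ classT n t F' ∧ s < t) ∨
  (¬ memD n F ∧ memD n F' ∧ ∃ s t, classT n s F ∧ classT n t F' ∧ s ≤ t) ∨
  (memD n F ∧ memD n F' ∧ llt n F F')

/-- `F` is a spanning facet for the shelling order `≺`. -/
def IsSpanningFacet (n : ℕ) (F : Finset ℕ) : Prop :=
  IsFacet n F ∧ ∀ lam ∈ F, ∃ G, IsFacet n G ∧ precOrd n G F ∧ G ∩ F = F.erase lam

/-- Condition (S1): `α_s = 3` and `s₁ ∈ V∖({0,1,…,2m−4} ∪ {n−1})`. -/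
def condS1 (n a s1 : ℕ) : Prop :=
  a = 3 ∧ s1 ∈ Finset.range n \ (Finset.range (2 * mVal n - 3) ∪ {n - 1})

/-- Condition (S2): `4 ≤ α_s ≤ m−2` and
`s₁ ∈ V∖({α_s−4, α_s−3, α_s−2} ∪ {α_s, …, 2m−α_s−1} ∪ {n−1})`. -/
def condS2 (n a s1 : ℕ) : Prop :=
  4 ≤ a ∧ a ≤ mVal n - 2 ∧
    s1 ∈ Finset.range n \
      (({a - 4, a - 3, a - 2} : Finset ℕ) ∪ Finset.Ico a (2 * mVal n - a) ∪ {n - 1})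

/-- Condition (S3): `m−1 ≤ α_s ≤ n−3` and
`s₁ ∈ V∖({ω, ω+1, …, α_s+3 (mod n)} ∪ {y})`, with `ω = min{2m−α_s, α_s−4}` and
`y = n−1` if `α_s < n−4`, `y = 0` if `α_s = n−4`, `y = 1` if `α_s > n−4`. -/
def condS3 (n a s1 : ℕ) : Prop :=
  mVal n - 1 ≤ a ∧ a ≤ n - 3 ∧
    s1 ∈ Finset.range n \
      ((Finset.Ico (min (2 * mVal n - a) (a - 4)) (a + 4)).image (· % n) ∪
        {if a < n - 4 then n - 1 else if a = n - 4 then 0 else 1})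

/-- The set `S` of facets. -/
def memS (n : ℕ) (F : Finset ℕ) : Prop :=
  IsFacet n F ∧ ∃ s s1, cDecomp n s s1 (n - 1) F ∧
    (condS1 n (alphaSeq n s) s1 ∨ condS2 n (alphaSeq n s) s1 ∨ condS3 n (alphaSeq n s) s1)

/-- Let `F, F'` be facets of `Δ₃(Wₙ)` with `F ∈ T_s`,
`F^c = {α_s} ⊔ {s₁, n−1}`, and `F'^c = {α_s, s₁, μ}` for some `μ ∈ F`.
If `α_s <_O μ`, then `F' ≪ F`. -/
theorem llt_of_exchange (n : ℕ) (hn : 9 ≤ n) (F F' : Finset ℕ)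
    (hF : IsFacet n F) (hF' : IsFacet n F') (s s1 : ℕ)
    (hdec : cDecomp n s s1 (n - 1) F) (μ : ℕ) (hμ : μ ∈ F)
    (hc : cmpl n F' = {alphaSeq n s, s1, μ})
    (hlt : ltO n (alphaSeq n s) μ) :
    llt n F' F := by

  obtain ⟨hclassF, hs1lt, hne1, hne2, hcF⟩ := hdec
  -- basic facts
  have hμn : μ < n := Finset.mem_range.mp (hF.1 hμ)
  have hμnc : μ ∉ cmpl n F := by
    simp [cmpl, hμ]
  have hμne : μ ∉ ({alphaSeq n s, s1, n - 1} : Finset ℕ) := by rwa [hcF] at hμnc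
  simp only [Finset.mem_insert, Finset.mem_singleton, not_or] at hμne
  obtain ⟨hμα, hμs1, hμn1⟩ := hμne
  have hs1mem : s1 ∈ cmpl n F := by rw [hcF]; simp
  have hltOs1 : ltO n (alphaSeq n s) s1 :=
    hclassF.2.2.2 s1 hs1mem (Ne.symm hne1)
  have hμlt' : μ < n - 1 := lt_of_le_of_ne (Nat.le_sub_one_of_lt hμn) hμn1
  -- F' is in class T_s
  have hclassF' : classT n s F' := by
    refine ⟨hclassF.1, hclassF.2.1, ?_, ?_⟩
    · rw [hc]; simp
    · intro x hx hxne
      rw [hc] at hx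
      simp only [Finset.mem_insert, Finset.mem_singleton] at hx
      rcases hx with h | h | h
      · exact absurd h hxne
      · subst h; exact hltOs1
      · subst h; exact hlt
  rcases lt_or_gt_of_ne hμs1 with hlt1 | hlt1
  · -- μ < s1
    refine ⟨s, s, μ, s1, s1, n - 1, ⟨hclassF', hlt1, fun h => hμα h.symm, hne1, ?_⟩,
      ⟨hclassF, hs1lt, hne1, hne2, hcF⟩, Or.inr ⟨rfl, Or.inl hlt1⟩⟩
    rw [hc]; ext x; simp; tauto
  · -- s1 < μ
    exact ⟨s, s, s1, μ, s1, n - 1, ⟨hclassF', hlt1, hne1, fun h => hμα h.symm, hc⟩,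
      ⟨hclassF, hs1lt, hne1, hne2, hcF⟩, Or.inr ⟨rfl, Or.inr ⟨rfl, hμlt'⟩⟩⟩
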